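/- Let E be a real Hilbert space, T a natural number, θ₀ ∈ E, and for each t < T let L_t : E → ℝ be such that its gradient map ∇L_t : E → E is differentiable on E with continuous derivative; write g_t = ∇L_t(θ₀) and let H_t : E →L[ℝ] E be the Fréchet derivative of ∇L_t at θ₀ (the Hessian operator). Define the SGD trajectory θ(η,0) = θ₀, θ(η,t+1) = θ(η,t) − η • ∇L_t(θ(η,t)). Then the remainder θ(η,T) − (θ₀ − η • Σ_{t<T} g_t + η² • Σ_{t<T} H_t(Σ_{t'<t} g_{t'})) is o(η²) as η → 0. -/
import Mathlib


open Asymptotics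

/-- Second-order (in the step size) expansion of the SGD/unlearning trajectory:
`θ(η,T) = θ₀ - η • ∑_{t<T} g_t + η² • ∑_{t<T} H_t (∑_{t'<t} g_{t'}) + o(η²)`
as `η → 0`, where `g_t = ∇L_t(θ₀)` and `H_t` is the Hessian of `L_t` at `θ₀`. -/
theorem sgd_trajectory_second_order
    {E : Type*} [NormedAddCommGroup E] [InnerProductSpace ℝ E] [CompleteSpace E]
    (T : ℕ) (θ₀ : E) (L : ℕ → E → ℝ)
    (hL : ∀ t < T, Differentiable ℝ (L t))
    (hgrad : ∀ t < T, Differentiable ℝ (fun x => gradient (L t) x))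
    (hgrad' : ∀ t < T, Continuous (fun x => fderiv ℝ (fun y => gradient (L t) y) x))
    (g : ℕ → E) (hg : ∀ t, g t = gradient (L t) θ₀)
    (H : ℕ → E →L[ℝ] E) (hH : ∀ t, H t = fderiv ℝ (fun y => gradient (L t) y) θ₀)
    (θ : ℝ → ℕ → E)
    (hθ0 : ∀ η : ℝ, θ η 0 = θ₀)
    (hθ : ∀ (η : ℝ) (t : ℕ), θ η (t + 1) = θ η t - η • gradient (L t) (θ η t)) :
    (fun η : ℝ => θ η T -
        (θ₀ - η • ∑ t ∈ Finset.range T, g t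
          + (η ^ 2) • ∑ t ∈ Finset.range T, H t (∑ t' ∈ Finset.range t, g t')))
      =o[nhds (0 : ℝ)] (fun η : ℝ => η ^ 2) := by
  -- generic big-O / little-o facts at 0
  have hsmulO : ∀ v : E, (fun η : ℝ => η • v) =O[nhds 0] fun η : ℝ => η := by
    intro v
    apply IsBigO.of_bound ‖v‖
    filter_upwards with η
    rw [norm_smul]
    exact le_of_eq (mul_comm _ _)
  have hsmulO2 : ∀ v : E, (fun η : ℝ => (η ^ 2) • v) =O[nhds 0] fun η : ℝ => η ^ 2 := by
    intro v
    apply IsBigO.of_bound ‖v‖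
    filter_upwards with η
    rw [norm_smul]
    exact le_of_eq (mul_comm _ _)
  have hηO1 : (fun η : ℝ => η) =O[nhds (0 : ℝ)] (fun _ => (1 : ℝ)) :=
    (Filter.tendsto_id (x := nhds (0:ℝ))).isBigO_one ℝ
  have hηo1 : (fun η : ℝ => η) =o[nhds (0 : ℝ)] (fun _ => (1 : ℝ)) :=
    (isLittleO_one_iff ℝ).mpr Filter.tendsto_id
  have hsqO : (fun η : ℝ => η ^ 2) =O[nhds (0:ℝ)] fun η : ℝ => η := by
    have := hηO1.mul (isBigO_refl (fun η : ℝ => η) (nhds 0))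
    simpa [sq] using this
  suffices h : ∀ t ≤ T, (fun η : ℝ => θ η t -
      (θ₀ - η • ∑ t' ∈ Finset.range t, g t'
        + (η ^ 2) • ∑ t' ∈ Finset.range t, H t' (∑ t'' ∈ Finset.range t', g t'')))
      =o[nhds (0 : ℝ)] (fun η : ℝ => η ^ 2) from h T le_rfl
  intro t ht
  induction t with
  | zero =>
    have : (fun η : ℝ => θ η 0 -
        (θ₀ - η • ∑ t' ∈ Finset.range 0, g t'
          + (η ^ 2) • ∑ t' ∈ Finset.range 0, H t' (∑ t'' ∈ Finset.range t', g t'')))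
        = fun _ => 0 := by
      funext η; simp [hθ0]
    rw [this]
    exact isLittleO_zero _ _
  | succ t ih =>
    have htT : t < T := ht
    have ih' := ih htT.le
    set Sv : E := ∑ t' ∈ Finset.range t, g t' with hSv
    set Cv : E := ∑ t' ∈ Finset.range t, H t' (∑ t'' ∈ Finset.range t', g t'') with hCv
    set e : ℝ → E := fun η => θ η t - (θ₀ - η • Sv + (η ^ 2) • Cv) with he
    have heo : e =o[nhds (0:ℝ)] fun η => η ^ 2 := ih'
    set r : ℝ → E := fun η => θ η t - θ₀ with hr
    have hre : ∀ η : ℝ, r η = -(η • Sv) + (η ^ 2) • Cv + e η := by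
      intro η; simp only [hr, he]; abel
    have hrO : r =O[nhds (0:ℝ)] fun η : ℝ => η := by
      have h1 : (fun η : ℝ => -(η • Sv)) =O[nhds 0] fun η : ℝ => η := (hsmulO Sv).neg_left
      have h2 : (fun η : ℝ => (η ^ 2) • Cv) =O[nhds 0] fun η : ℝ => η :=
        (hsmulO2 Cv).trans hsqO
      have h3 : e =O[nhds (0:ℝ)] fun η : ℝ => η := heo.isBigO.trans hsqO
      have := (h1.add h2).add h3
      exact (this.congr_left fun η => (hre η).symm)
    have hr0 : Filter.Tendsto r (nhds 0) (nhds (0 : E)) :=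
      hrO.trans_tendsto Filter.tendsto_id
    have hφ : Filter.Tendsto (fun η : ℝ => θ η t) (nhds 0) (nhds θ₀) := by
      have heq : (fun η : ℝ => θ η t) = fun η => θ₀ + r η := by
        funext η; simp [hr]
      rw [heq]
      simpa using tendsto_const_nhds.add hr0
    have hfd : HasFDerivAt (fun x => gradient (L t) x) (H t) θ₀ := by
      rw [hH]
      exact ((hgrad t htT) θ₀).hasFDerivAt
    set ε : ℝ → E := fun η => gradient (L t) (θ η t) - g t - H t (r η) with hε
    have hεo : ε =o[nhds (0:ℝ)] fun η : ℝ => η := by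
      have h2 := (hfd.isLittleO).comp_tendsto hφ
      have heq : ε = fun η => gradient (L t) (θ η t) - gradient (L t) θ₀
          - H t (θ η t - θ₀) := by
        funext η; simp [hε, hr, hg]
      rw [heq]
      exact h2.trans_isBigO hrO
    -- key algebraic identity
    have hexp : (fun η : ℝ => θ η (t+1) -
        (θ₀ - η • ∑ t' ∈ Finset.range (t+1), g t'
          + (η ^ 2) • ∑ t' ∈ Finset.range (t+1), H t' (∑ t'' ∈ Finset.range t', g t'')))
        = fun η : ℝ => e η - η • ε η - η • (H t) (e η) - (η ^ 3) • (H t) Cv := by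
      funext η
      have h1 : θ η (t+1) = θ η t - η • gradient (L t) (θ η t) := hθ η t
      have h2 : gradient (L t) (θ η t) = g t + H t (r η) + ε η := by
        simp only [hε]; abel
      have h5 : θ η t = θ₀ - η • Sv + (η ^ 2) • Cv + e η := by
        simp only [he]; abel
      have h6 : H t (r η) = -(η • H t Sv) + (η ^ 2) • H t Cv + H t (e η) := by
        rw [hre η]
        simp [map_add, map_smul, map_neg]
      rw [Finset.sum_range_succ, Finset.sum_range_succ, h1, h2, h6, h5]
      rw [← hSv, ← hCv]
      module
    rw [hexp]
    have o1 : (fun η : ℝ => η • ε η) =o[nhds (0:ℝ)] fun η : ℝ => η ^ 2 := by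
      have := (isBigO_refl (fun η : ℝ => η) (nhds 0)).smul_isLittleO hεo
      simpa [sq, smul_eq_mul] using this
    have o2 : (fun η : ℝ => η • (H t) (e η)) =o[nhds (0:ℝ)] fun η : ℝ => η ^ 2 := by
      have hHe : (fun η : ℝ => (H t) (e η)) =o[nhds (0:ℝ)] fun η : ℝ => η ^ 2 :=
        ((H t).isBigO_comp e (nhds 0)).trans_isLittleO heo
      have := hηO1.smul_isLittleO hHe
      simpa using this
    have o3 : (fun η : ℝ => (η ^ 3) • (H t) Cv) =o[nhds (0:ℝ)] fun η : ℝ => η ^ 2 := by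
      have hc : (fun η : ℝ => (η ^ 2) • (H t) Cv) =O[nhds (0:ℝ)] fun η : ℝ => η ^ 2 :=
        hsmulO2 ((H t) Cv)
      have := hηo1.smul_isBigO hc
      have heq : (fun η : ℝ => η • (η ^ 2) • (H t) Cv)
          = fun η : ℝ => (η ^ 3) • (H t) Cv := by
        funext η; rw [smul_smul]; ring_nf
      rw [← heq]
      simpa using this
    exact ((heo.sub o1).sub o2).sub o3
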